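/- The collection σ defined by σ_𝟎 = τ, σ_{e_i} = σ_i for i ∈ {1,…,c}, and σ_u = 0 for all u ∈ ℕ^c with |u| ≥ 2, is a system of higher homotopies for a₁,…,a_c on the Taylor complex T: (i) σ_𝟎 = τ satisfies τ ∘ τ = 0; (ii) for each j ∈ {1,…,c}, σ_𝟎 ∘ σ_{e_j} + σ_{e_j} ∘ σ_𝟎 equals multiplication by a_j on T; and (iii) for every u ∈ ℕ^c with |u| ≥ 2, Σ_{b + b' = u} σ_b ∘ σ_{b'} = 0. -/

import Mathlib

open MvPolynomial

/-- The position `p_{t,S}` of `t` in `S ∪ {t}`: one plus the number of elements of `S`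
smaller than `t`. -/
def taylorPos {r : ℕ} (S : Finset (Fin r)) (t : Fin r) : ℕ :=
  (S.filter fun s => s < t).card + 1

variable (𝕜 : Type*) [Field 𝕜] {n r : ℕ}

/-- `m_S`: the lcm of the monomials `m_j = x^{v j}` for `j ∈ S` (equal to `1` when `S = ∅`). -/
noncomputable def taylorLcm (v : Fin r → (Fin n →₀ ℕ)) (S : Finset (Fin r)) :
    MvPolynomial (Fin n) 𝕜 :=
  monomial (S.sup v) 1

/-- The matrix entry of the Taylor differential: `(-1)^{k-i} m_S / m_{S∖{s}}`
(where `i = p_{s,S}` is the position of `s` in `S` and `k = |S|`). -/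
noncomputable def taylorEntry (v : Fin r → (Fin n →₀ ℕ)) (S : Finset (Fin r)) (s : Fin r) :
    MvPolynomial (Fin n) 𝕜 :=
  (-1) ^ (S.card - taylorPos S s) * monomial (S.sup v - (S.erase s).sup v) 1

/-- The matrix entry of the homotopy `σ`:
`(-1)^{k - p_{t,S} - 1} f_t m_t m_S / m_{S ∪ {t}}` (where `k = |S|`); the sign is written as
`(-1)^{k + p_{t,S} + 1}`, which agrees with `(-1)^{k - p_{t,S} - 1}` since the exponents have
the same parity. -/
noncomputable def htpyEntry (v : Fin r → (Fin n →₀ ℕ)) (f : Fin r → MvPolynomial (Fin n) 𝕜)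
    (S : Finset (Fin r)) (t : Fin r) : MvPolynomial (Fin n) 𝕜 :=
  (-1) ^ (S.card + taylorPos S t + 1) *
    (f t * monomial (v t + S.sup v - (insert t S).sup v) 1)

/-- The total module of the Taylor complex: the free `Q`-module with basis
`{ε_S : S ⊆ {1,…,r}}`; the basis element `ε_S` is `Finsupp.single S 1`. -/
abbrev TaylorModule (n r : ℕ) := Finset (Fin r) →₀ MvPolynomial (Fin n) 𝕜

/-- The Taylor differential `τ` on the total module,
`τ(ε_S) = Σ_{s ∈ S} (-1)^{|S| - p_{s,S}} (m_S / m_{S∖{s}}) ε_{S∖{s}}`. -/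
noncomputable def taylorTau (v : Fin r → (Fin n →₀ ℕ)) :
    TaylorModule 𝕜 n r →ₗ[MvPolynomial (Fin n) 𝕜] TaylorModule 𝕜 n r :=
  Finsupp.lsum (MvPolynomial (Fin n) 𝕜) fun S =>
    LinearMap.toSpanSingleton _ _
      (∑ s ∈ S, Finsupp.single (S.erase s) (taylorEntry 𝕜 v S s))

/-- The homotopy `σ` attached to a coefficient family `f` (with `a = Σ_j f_j m_j`):
`σ(ε_S) = Σ_{t ∉ S} (-1)^{|S| - p_{t,S} - 1} (f_t m_t m_S / m_{S∪{t}}) ε_{S∪{t}}`. -/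
noncomputable def taylorHtpy (v : Fin r → (Fin n →₀ ℕ)) (f : Fin r → MvPolynomial (Fin n) 𝕜) :
    TaylorModule 𝕜 n r →ₗ[MvPolynomial (Fin n) 𝕜] TaylorModule 𝕜 n r :=
  Finsupp.lsum (MvPolynomial (Fin n) 𝕜) fun S =>
    LinearMap.toSpanSingleton _ _
      (∑ t ∈ Sᶜ, Finsupp.single (insert t S) (htpyEntry 𝕜 v f S t))

/-- The collection `σ_u` of statement 5: `σ_𝟎 = τ`, `σ_{e_i} = σ_i`, and `σ_u = 0` for
`|u| ≥ 2` (indices `u ∈ ℕ^c` are encoded as `Fin c →₀ ℕ`). -/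
noncomputable def taylorSystem {𝕜 : Type*} [Field 𝕜] {n r c : ℕ}
    (v : Fin r → (Fin n →₀ ℕ)) (f : Fin c → Fin r → MvPolynomial (Fin n) 𝕜)
    (u : Fin c →₀ ℕ) :
    TaylorModule 𝕜 n r →ₗ[MvPolynomial (Fin n) 𝕜] TaylorModule 𝕜 n r :=
  if u = 0 then taylorTau 𝕜 v
  else ∑ i : Fin c, if u = Finsupp.single i 1 then taylorHtpy 𝕜 v (f i) else 0


/-! ### Auxiliary lemmas for the main theorem -/

section Signs

variable {R : Type*} [Ring R]

lemma negOnePow_congr {a b : ℕ} (h : a % 2 = b % 2) : ((-1 : R)) ^ a = (-1) ^ b := by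
  rw [neg_one_pow_eq_pow_mod_two, h, ← neg_one_pow_eq_pow_mod_two]

lemma negOnePow_sub {a b : ℕ} (h : b ≤ a) : ((-1 : R)) ^ (a - b) = (-1) ^ (a + b) := by
  apply negOnePow_congr; omega

end Signs

lemma sign_cancel {Q : Type*} [CommRing Q] {e1 e2 : ℕ} (h : (e1 + e2) % 2 = 1) (M : Q) :
    (-1 : Q) ^ e1 * M + (-1) ^ e2 * M = 0 := by
  have h2 : ((-1 : Q)) ^ e2 = -(-1) ^ e1 := by
    rw [negOnePow_congr (a := e2) (b := e1 + 1) (by omega), pow_succ, mul_neg_one]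
  rw [h2]; ring

lemma signProdOne {Q : Type*} [CommRing Q] {a1 a2 : ℕ} (h : (a1 + a2) % 2 = 0) :
    (-1 : Q) ^ a1 * (-1) ^ a2 = 1 := by
  rw [← pow_add, negOnePow_congr (a := a1 + a2) (b := 0) (by omega), pow_zero]

lemma sign_cancel' {Q : Type*} [CommRing Q] {a1 a2 b1 b2 : ℕ}
    (h : (a1 + a2 + (b1 + b2)) % 2 = 1) :
    (-1 : Q) ^ a1 * (-1) ^ a2 + (-1 : Q) ^ b1 * (-1) ^ b2 = 0 := by
  rw [← pow_add, ← pow_add]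
  simpa using sign_cancel h (1 : Q)

section Pos

variable {S : Finset (Fin r)} {s t u : Fin r}

lemma taylorPos_le (hs : s ∈ S) : taylorPos S s ≤ S.card := by
  unfold taylorPos
  have hsub : (S.filter fun x => x < s) ⊆ S.erase s := by
    intro x hx
    rw [Finset.mem_filter] at hx
    exact Finset.mem_erase.mpr ⟨ne_of_lt hx.2, hx.1⟩
  have h2 := Finset.card_le_card hsub
  have h3 := Finset.card_erase_of_mem hs
  have h4 : 0 < S.card := Finset.card_pos.mpr ⟨s, hs⟩
  omega

lemma taylorPos_insert_self (S : Finset (Fin r)) (t : Fin r) :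
    taylorPos (insert t S) t = taylorPos S t := by
  unfold taylorPos
  rw [Finset.filter_insert, if_neg (lt_irrefl t)]

lemma taylorPos_erase_self (S : Finset (Fin r)) (t : Fin r) :
    taylorPos (S.erase t) t = taylorPos S t := by
  unfold taylorPos
  congr 2
  rw [Finset.filter_erase, Finset.erase_eq_of_notMem]
  simp

lemma taylorPos_erase_of_not_lt (h : ¬ s < t) :
    taylorPos (S.erase s) t = taylorPos S t := by
  unfold taylorPos
  rw [Finset.filter_erase, Finset.erase_eq_of_notMem (by simp [h])]

lemma taylorPos_erase_of_lt (hs : s ∈ S) (h : s < t) :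
    taylorPos (S.erase s) t + 1 = taylorPos S t := by
  unfold taylorPos
  rw [Finset.filter_erase, Finset.card_erase_of_mem
    (show s ∈ S.filter fun x => x < t from Finset.mem_filter.mpr ⟨hs, h⟩)]
  have : 0 < (S.filter fun x => x < t).card :=
    Finset.card_pos.mpr ⟨s, show s ∈ S.filter fun x => x < t from Finset.mem_filter.mpr ⟨hs, h⟩⟩
  omega

lemma taylorPos_insert_of_not_lt (h : ¬ u < t) :
    taylorPos (insert u S) t = taylorPos S t := by
  unfold taylorPos
  rw [Finset.filter_insert, if_neg h]

lemma taylorPos_insert_of_lt (hu : u ∉ S) (h : u < t) :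
    taylorPos (insert u S) t = taylorPos S t + 1 := by
  unfold taylorPos
  rw [Finset.filter_insert, if_pos h,
    Finset.card_insert_of_notMem (fun hc => hu (Finset.mem_filter.mp hc).1)]

end Pos

section Sup

variable (v : Fin r → (Fin n →₀ ℕ)) (s t : Fin r) {S : Finset (Fin r)}

lemma sup_erase_le : (S.erase s).sup v ≤ S.sup v :=
  Finset.sup_mono (Finset.erase_subset _ _)

lemma le_sup_insert : S.sup v ≤ (insert t S).sup v :=
  Finset.sup_mono (Finset.subset_insert _ _)

lemma sup_insert_le (S : Finset (Fin r)) : (insert t S).sup v ≤ v t + S.sup v := by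
  rw [Finset.sup_insert]
  exact sup_le le_self_add le_add_self

end Sup

lemma tsub_helper {n : ℕ} {X Y Z w : Fin n →₀ ℕ} (h1 : Y ≤ X) (h2 : Z ≤ w + Y) :
    (X - Y) + (w + Y - Z) = w + X - Z := by
  rw [← add_tsub_assoc_of_le h2, show (X - Y) + (w + Y) = w + X from by
    rw [add_comm w Y, ← add_assoc, tsub_add_cancel_of_le h1, add_comm]]

lemma monomial_one_mul (x y : Fin n →₀ ℕ) :
    (monomial x 1 : MvPolynomial (Fin n) 𝕜) * monomial y 1 = monomial (x + y) 1 := by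
  rw [monomial_mul, mul_one]

/-- Key identity A -/
lemma keyA (v : Fin r → (Fin n →₀ ℕ)) {S : Finset (Fin r)} {s s' : Fin r}
    (hs : s ∈ S) (hs' : s' ∈ S) (hne : s ≠ s') :
    taylorEntry 𝕜 v S s * taylorEntry 𝕜 v (S.erase s) s' +
      taylorEntry 𝕜 v S s' * taylorEntry 𝕜 v (S.erase s') s = 0 := by
  have hs'e : s' ∈ S.erase s := Finset.mem_erase.mpr ⟨hne.symm, hs'⟩
  have hse : s ∈ S.erase s' := Finset.mem_erase.mpr ⟨hne, hs⟩
  have hps : taylorPos S s ≤ S.card := taylorPos_le hs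
  have hps' : taylorPos S s' ≤ S.card := taylorPos_le hs'
  have hp1 : taylorPos (S.erase s) s' ≤ (S.erase s).card := taylorPos_le hs'e
  have hp2 : taylorPos (S.erase s') s ≤ (S.erase s').card := taylorPos_le hse
  have hm1 : (monomial (S.sup v - (S.erase s).sup v) 1 : MvPolynomial (Fin n) 𝕜) *
      monomial ((S.erase s).sup v - ((S.erase s).erase s').sup v) 1 =
      monomial (S.sup v - ((S.erase s).erase s').sup v) 1 := by
    rw [monomial_one_mul,
      tsub_add_tsub_cancel (sup_erase_le v s) (sup_erase_le v s')]
  have hm2 : (monomial (S.sup v - (S.erase s').sup v) 1 : MvPolynomial (Fin n) 𝕜) *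
      monomial ((S.erase s').sup v - ((S.erase s').erase s).sup v) 1 =
      monomial (S.sup v - ((S.erase s).erase s').sup v) 1 := by
    rw [monomial_one_mul,
      tsub_add_tsub_cancel (sup_erase_le v s') (sup_erase_le v s), Finset.erase_right_comm]
  simp only [taylorEntry]
  rw [negOnePow_sub hps, negOnePow_sub hps', negOnePow_sub hp1, negOnePow_sub hp2,
    mul_mul_mul_comm, mul_mul_mul_comm ((-1) ^ (S.card + taylorPos S s')),
    hm1, hm2, ← pow_add, ← pow_add]
  apply sign_cancel
  have hc : (S.erase s).card = S.card - 1 := Finset.card_erase_of_mem hs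
  have hc' : (S.erase s').card = S.card - 1 := Finset.card_erase_of_mem hs'
  have hcard : 0 < S.card := Finset.card_pos.mpr ⟨s, hs⟩
  rcases hne.lt_or_gt with h | h
  · have e1 : taylorPos (S.erase s) s' + 1 = taylorPos S s' := taylorPos_erase_of_lt hs h
    have e2 : taylorPos (S.erase s') s = taylorPos S s := taylorPos_erase_of_not_lt (asymm h)
    omega
  · have e1 : taylorPos (S.erase s) s' = taylorPos S s' := taylorPos_erase_of_not_lt (asymm h)
    have e2 : taylorPos (S.erase s') s + 1 = taylorPos S s := taylorPos_erase_of_lt hs' h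
    omega

/-- Diagonal identity 1: insert `t` then erase it. -/
lemma keyB_diag1 (v : Fin r → (Fin n →₀ ℕ)) (f : Fin r → MvPolynomial (Fin n) 𝕜)
    {S : Finset (Fin r)} {t : Fin r} (ht : t ∉ S) :
    htpyEntry 𝕜 v f S t * taylorEntry 𝕜 v (insert t S) t = f t * monomial (v t) 1 := by
  have hp : taylorPos (insert t S) t ≤ (insert t S).card :=
    taylorPos_le (Finset.mem_insert_self t S)
  have hm : (monomial (v t + S.sup v - (insert t S).sup v) 1 : MvPolynomial (Fin n) 𝕜) *
      monomial ((insert t S).sup v - ((insert t S).erase t).sup v) 1 = monomial (v t) 1 := by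
    rw [monomial_one_mul, Finset.erase_insert ht,
      tsub_add_tsub_cancel (sup_insert_le v t S) (le_sup_insert v t), add_tsub_cancel_right]
  have h1 : taylorPos (insert t S) t = taylorPos S t := taylorPos_insert_self S t
  have h2 : (insert t S).card = S.card + 1 := Finset.card_insert_of_notMem ht
  have hone : ((-1 : MvPolynomial (Fin n) 𝕜)) ^ (S.card + taylorPos S t + 1) *
      (-1) ^ ((insert t S).card + taylorPos (insert t S) t) = 1 := signProdOne (by omega)
  simp only [htpyEntry, taylorEntry]
  rw [negOnePow_sub hp]
  linear_combination (f t * (-1 : MvPolynomial (Fin n) 𝕜) ^ (S.card + taylorPos S t + 1) *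
      (-1) ^ ((insert t S).card + taylorPos (insert t S) t)) * hm +
    (f t * (monomial (v t) 1 : MvPolynomial (Fin n) 𝕜)) * hone

/-- Diagonal identity 2: erase `s` then insert it back. -/
lemma keyB_diag2 (v : Fin r → (Fin n →₀ ℕ)) (f : Fin r → MvPolynomial (Fin n) 𝕜)
    {S : Finset (Fin r)} {s : Fin r} (hs : s ∈ S) :
    taylorEntry 𝕜 v S s * htpyEntry 𝕜 v f (S.erase s) s = f s * monomial (v s) 1 := by
  have hp : taylorPos S s ≤ S.card := taylorPos_le hs
  have hm : (monomial (S.sup v - (S.erase s).sup v) 1 : MvPolynomial (Fin n) 𝕜) *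
      monomial (v s + (S.erase s).sup v - (insert s (S.erase s)).sup v) 1 =
      monomial (v s) 1 := by
    rw [monomial_one_mul, tsub_helper (sup_erase_le v s)
      (sup_insert_le v s (S.erase s)), Finset.insert_erase hs, add_tsub_cancel_right]
  have h1 : taylorPos (S.erase s) s = taylorPos S s := taylorPos_erase_self S s
  have h2 : (S.erase s).card = S.card - 1 := Finset.card_erase_of_mem hs
  have h3 : 0 < S.card := Finset.card_pos.mpr ⟨s, hs⟩
  have hone : ((-1 : MvPolynomial (Fin n) 𝕜)) ^ (S.card + taylorPos S s) *
      (-1) ^ ((S.erase s).card + taylorPos (S.erase s) s + 1) = 1 := signProdOne (by omega)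
  simp only [htpyEntry, taylorEntry]
  rw [negOnePow_sub hp]
  linear_combination (f s * (-1 : MvPolynomial (Fin n) 𝕜) ^ (S.card + taylorPos S s) *
      (-1) ^ ((S.erase s).card + taylorPos (S.erase s) s + 1)) * hm +
    (f s * (monomial (v s) 1 : MvPolynomial (Fin n) 𝕜)) * hone


/-- Off-diagonal identity B: insert `t`, erase `s` vs erase `s`, insert `t`. -/
lemma keyB_off (v : Fin r → (Fin n →₀ ℕ)) (f : Fin r → MvPolynomial (Fin n) 𝕜)
    {S : Finset (Fin r)} {s t : Fin r} (hs : s ∈ S) (ht : t ∉ S) :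
    htpyEntry 𝕜 v f S t * taylorEntry 𝕜 v (insert t S) s +
      taylorEntry 𝕜 v S s * htpyEntry 𝕜 v f (S.erase s) t = 0 := by
  have hne : t ≠ s := fun h => ht (h ▸ hs)
  have hps : taylorPos S s ≤ S.card := taylorPos_le hs
  have hps' : taylorPos (insert t S) s ≤ (insert t S).card :=
    taylorPos_le (Finset.mem_insert_of_mem hs)
  have hsets : (insert t S).erase s = insert t (S.erase s) := Finset.erase_insert_of_ne hne
  have hm1 : (monomial (v t + S.sup v - (insert t S).sup v) 1 : MvPolynomial (Fin n) 𝕜) *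
      monomial ((insert t S).sup v - (insert t (S.erase s)).sup v) 1 =
      monomial (v t + S.sup v - (insert t (S.erase s)).sup v) 1 := by
    rw [monomial_one_mul, tsub_add_tsub_cancel (sup_insert_le v t S)
      (by rw [← hsets]; exact sup_erase_le v s)]
  have hm2 : (monomial (S.sup v - (S.erase s).sup v) 1 : MvPolynomial (Fin n) 𝕜) *
      monomial (v t + (S.erase s).sup v - (insert t (S.erase s)).sup v) 1 =
      monomial (v t + S.sup v - (insert t (S.erase s)).sup v) 1 := by
    rw [monomial_one_mul, tsub_helper (sup_erase_le v s) (sup_insert_le v t (S.erase s))]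
  have hcard : (insert t S).card = S.card + 1 := Finset.card_insert_of_notMem ht
  have hcard' : (S.erase s).card = S.card - 1 := Finset.card_erase_of_mem hs
  have h0 : 0 < S.card := Finset.card_pos.mpr ⟨s, hs⟩
  have hsc : ((-1 : MvPolynomial (Fin n) 𝕜)) ^ (S.card + taylorPos S t + 1) *
        (-1) ^ ((insert t S).card + taylorPos (insert t S) s) +
      ((-1 : MvPolynomial (Fin n) 𝕜)) ^ (S.card + taylorPos S s) *
        (-1) ^ ((S.erase s).card + taylorPos (S.erase s) t + 1) = 0 := by
    apply sign_cancel'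
    rcases hne.lt_or_gt with h | h
    · have e1 : taylorPos (insert t S) s = taylorPos S s + 1 :=
        taylorPos_insert_of_lt ht h
      have e2 : taylorPos (S.erase s) t = taylorPos S t :=
        taylorPos_erase_of_not_lt (asymm h)
      omega
    · have e1 : taylorPos (insert t S) s = taylorPos S s :=
        taylorPos_insert_of_not_lt (asymm h)
      have e2 : taylorPos (S.erase s) t + 1 = taylorPos S t :=
        taylorPos_erase_of_lt hs h
      omega
  simp only [htpyEntry, taylorEntry]
  rw [negOnePow_sub hps, negOnePow_sub hps', hsets]
  linear_combination (f t * (-1 : MvPolynomial (Fin n) 𝕜) ^ (S.card + taylorPos S t + 1) *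
      (-1) ^ ((insert t S).card + taylorPos (insert t S) s)) * hm1 +
    (f t * (-1 : MvPolynomial (Fin n) 𝕜) ^ (S.card + taylorPos S s) *
      (-1) ^ ((S.erase s).card + taylorPos (S.erase s) t + 1)) * hm2 +
    (f t * (monomial (v t + S.sup v - (insert t (S.erase s)).sup v) 1 :
      MvPolynomial (Fin n) 𝕜)) * hsc

/-- Identity C: inserting `t` then `t'` vs `t'` then `t`. -/
lemma keyC (v : Fin r → (Fin n →₀ ℕ)) (f g : Fin r → MvPolynomial (Fin n) 𝕜)
    {S : Finset (Fin r)} {t t' : Fin r} (ht : t ∉ S) (ht' : t' ∉ S) (hne : t ≠ t') :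
    htpyEntry 𝕜 v g S t * htpyEntry 𝕜 v f (insert t S) t' +
      htpyEntry 𝕜 v f S t' * htpyEntry 𝕜 v g (insert t' S) t = 0 := by
  have hm1 : (monomial (v t + S.sup v - (insert t S).sup v) 1 : MvPolynomial (Fin n) 𝕜) *
      monomial (v t' + (insert t S).sup v - (insert t' (insert t S)).sup v) 1 =
      monomial (v t' + (v t + S.sup v) - (insert t' (insert t S)).sup v) 1 := by
    rw [monomial_one_mul, tsub_helper (sup_insert_le v t S) (sup_insert_le v t' (insert t S))]
  have hm2 : (monomial (v t' + S.sup v - (insert t' S).sup v) 1 : MvPolynomial (Fin n) 𝕜) *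
      monomial (v t + (insert t' S).sup v - (insert t (insert t' S)).sup v) 1 =
      monomial (v t' + (v t + S.sup v) - (insert t' (insert t S)).sup v) 1 := by
    rw [monomial_one_mul, tsub_helper (sup_insert_le v t' S) (sup_insert_le v t (insert t' S)),
      Finset.insert_comm, add_left_comm]
  have hcard : (insert t S).card = S.card + 1 := Finset.card_insert_of_notMem ht
  have hcard' : (insert t' S).card = S.card + 1 := Finset.card_insert_of_notMem ht'
  have hsc : ((-1 : MvPolynomial (Fin n) 𝕜)) ^ (S.card + taylorPos S t + 1) *
        (-1) ^ ((insert t S).card + taylorPos (insert t S) t' + 1) +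
      ((-1 : MvPolynomial (Fin n) 𝕜)) ^ (S.card + taylorPos S t' + 1) *
        (-1) ^ ((insert t' S).card + taylorPos (insert t' S) t + 1) = 0 := by
    apply sign_cancel'
    rcases hne.lt_or_gt with h | h
    · have e1 : taylorPos (insert t S) t' = taylorPos S t' + 1 :=
        taylorPos_insert_of_lt ht h
      have e2 : taylorPos (insert t' S) t = taylorPos S t :=
        taylorPos_insert_of_not_lt (asymm h)
      omega
    · have e1 : taylorPos (insert t S) t' = taylorPos S t' :=
        taylorPos_insert_of_not_lt (asymm h)
      have e2 : taylorPos (insert t' S) t = taylorPos S t + 1 :=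
        taylorPos_insert_of_lt ht' h
      omega
  simp only [htpyEntry]
  linear_combination (g t * f t' * (-1 : MvPolynomial (Fin n) 𝕜) ^ (S.card + taylorPos S t + 1) *
      (-1) ^ ((insert t S).card + taylorPos (insert t S) t' + 1)) * hm1 +
    (g t * f t' * (-1 : MvPolynomial (Fin n) 𝕜) ^ (S.card + taylorPos S t' + 1) *
      (-1) ^ ((insert t' S).card + taylorPos (insert t' S) t + 1)) * hm2 +
    (g t * f t' * (monomial (v t' + (v t + S.sup v) - (insert t' (insert t S)).sup v) 1 :
      MvPolynomial (Fin n) 𝕜)) * hsc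

/-! ### The maps on basis elements -/

lemma single_sum_swap {A Q : Type*} [CommRing Q] [DecidableEq A] (a : A) (s : Finset (Fin r))
    (c : Fin r → Q) :
    Finsupp.single a (∑ t ∈ s, c t) = ∑ t ∈ s, Finsupp.single a (c t) := by
  classical
  induction s using Finset.induction_on with
  | empty => simp
  | insert _ _ h ih => rw [Finset.sum_insert h, Finset.sum_insert h, Finsupp.single_add, ih]

lemma taylorTau_single (v : Fin r → (Fin n →₀ ℕ)) (S : Finset (Fin r))
    (q : MvPolynomial (Fin n) 𝕜) :
    taylorTau 𝕜 v (Finsupp.single S q) =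
      ∑ s ∈ S, Finsupp.single (S.erase s) (q * taylorEntry 𝕜 v S s) := by
  rw [taylorTau, Finsupp.lsum_single, LinearMap.toSpanSingleton_apply, Finset.smul_sum]
  simp only [Finsupp.smul_single, smul_eq_mul]

lemma taylorHtpy_single (v : Fin r → (Fin n →₀ ℕ)) (f : Fin r → MvPolynomial (Fin n) 𝕜)
    (S : Finset (Fin r)) (q : MvPolynomial (Fin n) 𝕜) :
    taylorHtpy 𝕜 v f (Finsupp.single S q) =
      ∑ t ∈ Sᶜ, Finsupp.single (insert t S) (q * htpyEntry 𝕜 v f S t) := by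
  rw [taylorHtpy, Finsupp.lsum_single, LinearMap.toSpanSingleton_apply, Finset.smul_sum]
  simp only [Finsupp.smul_single, smul_eq_mul]

/-- `τ ∘ τ = 0`. -/
lemma tau_comp_tau (v : Fin r → (Fin n →₀ ℕ)) :
    taylorTau 𝕜 v ∘ₗ taylorTau 𝕜 v = 0 := by
  apply Finsupp.lhom_ext
  intro S q
  rw [LinearMap.comp_apply, LinearMap.zero_apply, taylorTau_single, map_sum]
  simp only [taylorTau_single]
  rw [Finset.sum_sigma']
  refine Finset.sum_involution (fun p _ => ⟨p.2, p.1⟩) ?_ ?_ ?_ ?_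
  · intro p hp
    rw [Finset.mem_sigma] at hp
    obtain ⟨h1, h2⟩ := hp
    rw [Finset.mem_erase] at h2
    rw [Finset.erase_right_comm (a := p.2) (b := p.1), ← Finsupp.single_add,
      mul_assoc, mul_assoc, ← mul_add, keyA 𝕜 v h1 h2.2 h2.1.symm, mul_zero,
      Finsupp.single_zero]
  · intro p hp _
    rw [Finset.mem_sigma] at hp
    have h2 := hp.2
    rw [Finset.mem_erase] at h2
    intro hc
    exact h2.1 (congrArg Sigma.fst hc)
  · intro p hp
    rw [Finset.mem_sigma] at hp ⊢
    have h2 := hp.2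
    rw [Finset.mem_erase] at h2
    exact ⟨h2.2, Finset.mem_erase.mpr ⟨fun hc => h2.1 hc.symm, hp.1⟩⟩
  · intro p _
    rfl

/-- `τ ∘ σ + σ ∘ τ` is multiplication by `Σ_t f_t m_t`. -/
lemma tau_htpy_homotopy (v : Fin r → (Fin n →₀ ℕ)) (f : Fin r → MvPolynomial (Fin n) 𝕜) :
    taylorTau 𝕜 v ∘ₗ taylorHtpy 𝕜 v f + taylorHtpy 𝕜 v f ∘ₗ taylorTau 𝕜 v =
      (∑ t : Fin r, f t * monomial (v t) 1) • LinearMap.id := by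
  apply Finsupp.lhom_ext
  intro S q
  rw [LinearMap.add_apply, LinearMap.comp_apply, LinearMap.comp_apply,
    taylorHtpy_single, taylorTau_single, map_sum, map_sum,
    LinearMap.smul_apply, LinearMap.id_apply]
  simp only [taylorTau_single, taylorHtpy_single]
  have h1 : ∀ t ∈ Sᶜ, (∑ s ∈ insert t S, Finsupp.single ((insert t S).erase s)
        (q * htpyEntry 𝕜 v f S t * taylorEntry 𝕜 v (insert t S) s)) =
      Finsupp.single S (q * (f t * monomial (v t) 1)) +
        ∑ s ∈ S, Finsupp.single ((insert t S).erase s)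
          (q * htpyEntry 𝕜 v f S t * taylorEntry 𝕜 v (insert t S) s) := by
    intro t ht
    rw [Finset.mem_compl] at ht
    rw [Finset.sum_insert ht, Finset.erase_insert ht, mul_assoc, keyB_diag1 𝕜 v f ht]
  have h2 : ∀ s ∈ S, (∑ t ∈ (S.erase s)ᶜ, Finsupp.single (insert t (S.erase s))
        (q * taylorEntry 𝕜 v S s * htpyEntry 𝕜 v f (S.erase s) t)) =
      Finsupp.single S (q * (f s * monomial (v s) 1)) +
        ∑ t ∈ Sᶜ, Finsupp.single (insert t (S.erase s))
          (q * taylorEntry 𝕜 v S s * htpyEntry 𝕜 v f (S.erase s) t) := by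
    intro s hs
    rw [Finset.compl_erase, Finset.sum_insert (by simp [hs]), Finset.insert_erase hs,
      mul_assoc, keyB_diag2 𝕜 v f hs]
  rw [Finset.sum_congr rfl h1, Finset.sum_congr rfl h2, Finset.sum_add_distrib,
    Finset.sum_add_distrib, add_add_add_comm]
  have hoff : (∑ t ∈ Sᶜ, ∑ s ∈ S, Finsupp.single ((insert t S).erase s)
        (q * htpyEntry 𝕜 v f S t * taylorEntry 𝕜 v (insert t S) s)) +
      (∑ s ∈ S, ∑ t ∈ Sᶜ, Finsupp.single (insert t (S.erase s))
        (q * taylorEntry 𝕜 v S s * htpyEntry 𝕜 v f (S.erase s) t)) = 0 := by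
    rw [Finset.sum_comm (s := S), ← Finset.sum_add_distrib]
    refine Finset.sum_eq_zero fun t ht => ?_
    rw [← Finset.sum_add_distrib]
    refine Finset.sum_eq_zero fun s hs => ?_
    rw [Finset.mem_compl] at ht
    have hts : t ≠ s := fun h => ht (h ▸ hs)
    rw [Finset.erase_insert_of_ne hts, ← Finsupp.single_add, mul_assoc, mul_assoc,
      ← mul_add, keyB_off 𝕜 v f hs ht, mul_zero, Finsupp.single_zero]
  rw [hoff, add_zero, add_comm, Finset.sum_add_sum_compl, Finsupp.smul_single,
    smul_eq_mul, Finset.sum_mul]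
  rw [show ∀ c : Fin r → MvPolynomial (Fin n) 𝕜, (∑ t : Fin r, c t * q)
      = ∑ t : Fin r, q * c t from fun c => by simp_rw [mul_comm], single_sum_swap]

/-- `σ_f ∘ σ_f = 0`. -/
lemma htpy_comp_htpy_self (v : Fin r → (Fin n →₀ ℕ)) (f : Fin r → MvPolynomial (Fin n) 𝕜) :
    taylorHtpy 𝕜 v f ∘ₗ taylorHtpy 𝕜 v f = 0 := by
  apply Finsupp.lhom_ext
  intro S q
  rw [LinearMap.comp_apply, LinearMap.zero_apply, taylorHtpy_single, map_sum]
  simp only [taylorHtpy_single]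
  rw [Finset.sum_sigma']
  refine Finset.sum_involution (fun p _ => ⟨p.2, p.1⟩) ?_ ?_ ?_ ?_
  · intro p hp
    rw [Finset.mem_sigma, Finset.mem_compl, Finset.mem_compl, Finset.mem_insert] at hp
    obtain ⟨h1, h2⟩ := hp
    push_neg at h2
    beta_reduce
    rw [Finset.insert_comm (a := p.2) (b := p.1), ← Finsupp.single_add, mul_assoc, mul_assoc,
      ← mul_add, keyC 𝕜 v f f h1 h2.2 (fun hc => h2.1 hc.symm), mul_zero, Finsupp.single_zero]
  · intro p hp _
    rw [Finset.mem_sigma, Finset.mem_compl, Finset.mem_compl, Finset.mem_insert] at hp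
    push_neg at hp
    intro hc
    exact hp.2.1 (congrArg Sigma.fst hc)
  · intro p hp
    rw [Finset.mem_sigma, Finset.mem_compl, Finset.mem_compl, Finset.mem_insert] at hp
    push_neg at hp
    rw [Finset.mem_sigma, Finset.mem_compl, Finset.mem_compl, Finset.mem_insert]
    push_neg
    exact ⟨hp.2.2, fun hc => hp.2.1 hc.symm, hp.1⟩
  · intro p _
    rfl

/-- `σ_f ∘ σ_g + σ_g ∘ σ_f = 0`. -/
lemma htpy_anticomm (v : Fin r → (Fin n →₀ ℕ)) (f g : Fin r → MvPolynomial (Fin n) 𝕜) :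
    taylorHtpy 𝕜 v f ∘ₗ taylorHtpy 𝕜 v g + taylorHtpy 𝕜 v g ∘ₗ taylorHtpy 𝕜 v f = 0 := by
  apply Finsupp.lhom_ext
  intro S q
  rw [LinearMap.add_apply, LinearMap.comp_apply, LinearMap.comp_apply, LinearMap.zero_apply,
    taylorHtpy_single, taylorHtpy_single, map_sum, map_sum]
  simp only [taylorHtpy_single]
  rw [Finset.sum_sigma', Finset.sum_sigma']
  rw [show (∑ p ∈ Sᶜ.sigma (fun t => (insert t S)ᶜ),
        Finsupp.single (insert p.2 (insert p.1 S))
          (q * htpyEntry 𝕜 v f S p.1 * htpyEntry 𝕜 v g (insert p.1 S) p.2)) =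
      ∑ p ∈ Sᶜ.sigma (fun t => (insert t S)ᶜ),
        Finsupp.single (insert p.1 (insert p.2 S))
          (q * htpyEntry 𝕜 v f S p.2 * htpyEntry 𝕜 v g (insert p.2 S) p.1) from
    Finset.sum_nbij' (fun p => ⟨p.2, p.1⟩) (fun p => ⟨p.2, p.1⟩) ?_ ?_ ?_ ?_ ?_]
  · rw [← Finset.sum_add_distrib]
    refine Finset.sum_eq_zero fun p hp => ?_
    rw [Finset.mem_sigma, Finset.mem_compl, Finset.mem_compl, Finset.mem_insert] at hp
    push_neg at hp
    rw [Finset.insert_comm p.1 p.2 S, ← Finsupp.single_add, mul_assoc, mul_assoc, ← mul_add,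
      keyC 𝕜 v f g hp.1 hp.2.2 (fun hc => hp.2.1 hc.symm), mul_zero, Finsupp.single_zero]
  · intro p hp
    rw [Finset.mem_sigma, Finset.mem_compl, Finset.mem_compl, Finset.mem_insert] at hp
    push_neg at hp
    rw [Finset.mem_sigma, Finset.mem_compl, Finset.mem_compl, Finset.mem_insert]
    push_neg
    exact ⟨hp.2.2, fun hc => hp.2.1 hc.symm, hp.1⟩
  · intro p hp
    rw [Finset.mem_sigma, Finset.mem_compl, Finset.mem_compl, Finset.mem_insert] at hp
    push_neg at hp
    rw [Finset.mem_sigma, Finset.mem_compl, Finset.mem_compl, Finset.mem_insert]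
    push_neg
    exact ⟨hp.2.2, fun hc => hp.2.1 hc.symm, hp.1⟩
  · intro p _
    rfl
  · intro p _
    rfl
  · intro p _
    rfl


/-! ### The system `σ` -/

variable {c : ℕ}

lemma taylorSystem_zero (v : Fin r → (Fin n →₀ ℕ))
    (f : Fin c → Fin r → MvPolynomial (Fin n) 𝕜) :
    taylorSystem v f 0 = taylorTau 𝕜 v := by
  simp [taylorSystem]

lemma taylorSystem_single (v : Fin r → (Fin n →₀ ℕ))
    (f : Fin c → Fin r → MvPolynomial (Fin n) 𝕜) (j : Fin c) :
    taylorSystem v f (Finsupp.single j 1) = taylorHtpy 𝕜 v (f j) := by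
  rw [taylorSystem, if_neg (by simp [Finsupp.single_eq_zero])]
  simp only [Finsupp.single_left_inj (one_ne_zero (α := ℕ))]
  simp [Finset.sum_ite_eq]

lemma taylorSystem_eq_zero (v : Fin r → (Fin n →₀ ℕ))
    (f : Fin c → Fin r → MvPolynomial (Fin n) 𝕜) {u : Fin c →₀ ℕ} (h0 : u ≠ 0)
    (h1 : ∀ i, u ≠ Finsupp.single i 1) : taylorSystem v f u = 0 := by
  rw [taylorSystem, if_neg h0]
  exact Finset.sum_eq_zero fun i _ => if_neg (h1 i)

/-- The collection `σ` with `σ_𝟎 = τ`, `σ_{e_i} = σ_i`, and `σ_u = 0` for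
`|u| ≥ 2` is a system of higher homotopies for `a_1, …, a_c` on the Taylor complex:
(i) `σ_𝟎` is the differential `τ` and `τ ∘ τ = 0`;
(ii) for each `j`, `σ_𝟎 ∘ σ_{e_j} + σ_{e_j} ∘ σ_𝟎` is multiplication by `a_j`;
(iii) for every `u` with `|u| ≥ 2`, `Σ_{b + b' = u} σ_b ∘ σ_{b'} = 0`.
Here `m_j = x^{v j}` and `a_i = Σ_j f_{i,j} m_j`. -/
theorem taylor_system_of_higher_homotopies {𝕜 : Type*} [Field 𝕜] {n r c : ℕ}
    (v : Fin r → (Fin n →₀ ℕ)) (a : Fin c → MvPolynomial (Fin n) 𝕜)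
    (f : Fin c → Fin r → MvPolynomial (Fin n) 𝕜)
    (ha : ∀ i, a i = ∑ j : Fin r, f i j * monomial (v j) 1) :
    (taylorSystem v f 0 = taylorTau 𝕜 v ∧
      taylorSystem v f 0 ∘ₗ taylorSystem v f 0 = 0) ∧
    (∀ j : Fin c,
      taylorSystem v f 0 ∘ₗ taylorSystem v f (Finsupp.single j 1) +
        taylorSystem v f (Finsupp.single j 1) ∘ₗ taylorSystem v f 0 =
        a j • LinearMap.id) ∧
    (∀ u : Fin c →₀ ℕ, 2 ≤ u.sum (fun _ x => x) →
      ∑ p ∈ Finset.HasAntidiagonal.antidiagonal u, taylorSystem v f p.1 ∘ₗ taylorSystem v f p.2 = 0) := by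
  refine ⟨⟨taylorSystem_zero 𝕜 v f, ?_⟩, ?_, ?_⟩
  · rw [taylorSystem_zero 𝕜 v f]
    exact tau_comp_tau 𝕜 v
  · intro j
    rw [taylorSystem_zero 𝕜 v f, taylorSystem_single 𝕜 v f j, ha j]
    exact tau_htpy_homotopy 𝕜 v (f j)
  · intro u hu
    have hu0 : u ≠ 0 := by
      rintro rfl
      simp [Finsupp.sum_zero_index] at hu
    have hu1 : ∀ i : Fin c, u ≠ Finsupp.single i 1 := by
      rintro i rfl
      rw [Finsupp.sum_single_index rfl] at hu
      omega
    have hterm : ∀ p ∈ Finset.HasAntidiagonal.antidiagonal u,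
        taylorSystem v f p.1 ∘ₗ taylorSystem v f p.2 =
        ∑ ij ∈ (Finset.univ ×ˢ Finset.univ : Finset (Fin c × Fin c)),
          (if p = (Finsupp.single ij.1 1, Finsupp.single ij.2 1)
            then taylorHtpy 𝕜 v (f ij.1) ∘ₗ taylorHtpy 𝕜 v (f ij.2) else 0) := by
      intro p hp
      rw [Finset.HasAntidiagonal.mem_antidiagonal] at hp
      by_cases h1 : p.1 = 0
      · have h2 : p.2 = u := by rw [← hp, h1, zero_add]
        rw [show taylorSystem v f p.2 = 0 from taylorSystem_eq_zero 𝕜 v f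
          (by rw [h2]; exact hu0) (by rw [h2]; exact hu1), LinearMap.comp_zero]
        symm
        refine Finset.sum_eq_zero fun ij _ => if_neg fun hc => ?_
        rw [hc] at h1
        exact one_ne_zero (Finsupp.single_eq_zero.mp h1)
      · by_cases h2 : p.2 = 0
        · have h1' : p.1 = u := by rw [← hp, h2, add_zero]
          rw [show taylorSystem v f p.1 = 0 from taylorSystem_eq_zero 𝕜 v f
            (by rw [h1']; exact hu0) (by rw [h1']; exact hu1), LinearMap.zero_comp]
          symm
          refine Finset.sum_eq_zero fun ij _ => if_neg fun hc => ?_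
          rw [hc] at h2
          exact one_ne_zero (Finsupp.single_eq_zero.mp h2)
        · rw [taylorSystem, if_neg h1, taylorSystem, if_neg h2, ← Module.End.mul_eq_comp,
            Finset.sum_mul_sum, ← Finset.sum_product']
          refine Finset.sum_congr rfl fun ij _ => ?_
          by_cases hi : p.1 = Finsupp.single ij.1 1 <;>
            by_cases hj : p.2 = Finsupp.single ij.2 1 <;>
            simp [hi, hj, Prod.ext_iff, Module.End.mul_eq_comp]
    rw [Finset.sum_congr rfl hterm, Finset.sum_comm]
    rw [Finset.sum_congr rfl fun ij (_ : ij ∈ (Finset.univ ×ˢ Finset.univ :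
        Finset (Fin c × Fin c))) => Finset.sum_ite_eq' (Finset.HasAntidiagonal.antidiagonal u)
        ((Finsupp.single ij.1 1, Finsupp.single ij.2 1)) _]
    simp only [Finset.HasAntidiagonal.mem_antidiagonal]
    refine Finset.sum_involution (fun p _ => (p.2, p.1)) ?_ ?_ ?_ ?_
    · intro p _
      by_cases h : Finsupp.single p.1 1 + Finsupp.single p.2 1 = u
      · rw [if_pos h, if_pos (by rwa [add_comm])]
        exact htpy_anticomm 𝕜 v (f p.1) (f p.2)
      · rw [if_neg h, if_neg (fun hc => h (by rwa [add_comm])), add_zero]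
    · intro p _ hne hc
      have hpp : p.1 = p.2 := congrArg Prod.snd hc
      apply hne
      obtain ⟨i, j⟩ := p
      simp only at hpp
      subst hpp
      split_ifs
      · exact htpy_comp_htpy_self 𝕜 v (f i)
      · rfl
    · intro p _
      exact Finset.mem_product.mpr ⟨Finset.mem_univ _, Finset.mem_univ _⟩
    · intro p _
      rfl
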